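/- Let F be a field with char(F) ≠ 2 and char(F) ≠ 3 in which every element is a square. Then for symmetric matrices X, Y ∈ M₃(F): (1) if X and Y both have matrix rank 1, there exist γ ∈ F and A ∈ GL₃(F) with γ³·(det A)² = 1 and γ·A·X·Aᵀ = Y; (2) the same holds if X and Y both have matrix rank 2; (3) for each k ≠ 0, the same holds if det(X) = det(Y) = k. -/

import Mathlib

open Matrix
private lemma perm_of_count (s t : Fin 3 → Bool)
    (h : (Finset.univ.filter fun i => s i = true).card =
         (Finset.univ.filter fun i => t i = true).card) :
    ∃ σ : Equiv.Perm (Fin 3), ∀ i, t i = s (σ i) := by revert h; revert s t; decide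

private lemma diag01 {F : Type*} [Field F] (h2 : (2:F) ≠ 0)
    (hsq : ∀ a : F, ∃ b : F, b ^ 2 = a)
    (M : Matrix (Fin 3) (Fin 3) F) (hM : M.IsSymm) :
    ∃ (B : Matrix (Fin 3) (Fin 3) F) (d : Fin 3 → Bool),
      IsUnit B.det ∧
      B * M * Bᵀ = diagonal (fun i => if d i then (1:F) else 0) ∧
      M.rank = (Finset.univ.filter fun i => d i = true).card := by
  classical
  haveI : Invertible (2 : F) := invertibleOfNonzero h2
  set Bf : LinearMap.BilinForm F (Fin 3 → F) := Matrix.toBilin' M with hBfdef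
  have hsymm : Bf.IsSymm := by
    refine ⟨fun x y => ?_⟩
    simp only [hBfdef, Matrix.toBilin'_apply', RingHom.id_apply]
    rw [dotProduct_mulVec, ← Matrix.mulVec_transpose, hM.eq, dotProduct_comm]
  obtain ⟨v0, hv0⟩ := LinearMap.BilinForm.exists_orthogonal_basis (LinearMap.BilinForm.isSymm_iff.1 hsymm)
  let v : Module.Basis (Fin 3) F (Fin 3 → F) :=
    v0.reindex (finCongr (Module.finrank_fin_fun F))
  have hv : ∀ i j, i ≠ j → Bf (v i) (v j) = 0 := by
    intro i j hij
    have := hv0 (i := (finCongr (Module.finrank_fin_fun F)).symm i)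
      (j := (finCongr (Module.finrank_fin_fun F)).symm j)
      (fun hc => hij ((finCongr (Module.finrank_fin_fun F)).symm.injective hc))
    simpa [v] using this
  have key : ∀ i, ∃ c : F, c ≠ 0 ∧
      c * c * Bf (v i) (v i) = (if Bf (v i) (v i) = 0 then 0 else 1) := by
    intro i
    by_cases h : Bf (v i) (v i) = 0
    · exact ⟨1, one_ne_zero, by simp [h]⟩
    · obtain ⟨b, hb⟩ := hsq (Bf (v i) (v i))⁻¹
      have hb0 : b ≠ 0 := by
        intro hb0
        apply inv_ne_zero h
        rw [← hb, hb0]; ring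
      refine ⟨b, hb0, ?_⟩
      rw [← sq, hb, if_neg h, inv_mul_cancel₀ h]
  choose c hc0 hc1 using key
  let u : Fin 3 → Fˣ := fun i => Units.mk0 (c i) (hc0 i)
  let w : Module.Basis (Fin 3) F (Fin 3 → F) := v.unitsSMul u
  have hwv : ∀ i, (w i : Fin 3 → F) = c i • v i := fun i => by
    rw [Module.Basis.unitsSMul_apply]; rfl
  let B : Matrix (Fin 3) (Fin 3) F := Matrix.of fun i j => w i j
  have hwB : ∀ i j, Bf (w i) (w j) = c i * c j * Bf (v i) (v j) := by
    intro i j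
    rw [hwv, hwv, LinearMap.map_smul₂, LinearMap.map_smul]
    simp [smul_eq_mul]; ring
  have hBt : Bᵀ = (Pi.basisFun F (Fin 3)).toMatrix w := by
    ext i j
    simp [B, Module.Basis.toMatrix_apply, Pi.basisFun_repr]
  haveI : Invertible ((Pi.basisFun F (Fin 3)).toMatrix ⇑w) :=
    (Pi.basisFun F (Fin 3)).invertibleToMatrix w
  have hdetB : IsUnit B.det := by
    have h1 : IsUnit ((Pi.basisFun F (Fin 3)).toMatrix ⇑w).det :=
      isUnit_det_of_invertible _
    rw [← hBt, det_transpose] at h1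
    exact h1
  have hmul : ∀ i j, (B * M * Bᵀ) i j = Bf (w i) (w j) := by
    intro i j
    simp only [hBfdef, Matrix.toBilin'_apply, mul_apply, transpose_apply, B,
      Matrix.of_apply, Finset.sum_mul]
    rw [Finset.sum_comm]
  let d : Fin 3 → Bool := fun i => !decide (Bf (v i) (v i) = 0)
  have hdiag : B * M * Bᵀ = diagonal (fun i => if d i then (1:F) else 0) := by
    ext i j
    rw [hmul i j, hwB i j]
    by_cases hij : i = j
    · subst hij
      rw [diagonal_apply_eq, hc1 i]
      by_cases h : Bf (v i) (v i) = 0 <;> simp [d, h]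
    · rw [hv i j hij, diagonal_apply_ne _ hij, mul_zero]
  refine ⟨B, d, hdetB, hdiag, ?_⟩
  have hdetBt : IsUnit Bᵀ.det := by rwa [det_transpose]
  have h1 : (B * M * Bᵀ).rank = M.rank := by
    rw [rank_mul_eq_left_of_isUnit_det _ _ hdetBt,
      rank_mul_eq_right_of_isUnit_det _ _ hdetB]
  rw [← h1, hdiag, Matrix.rank_diagonal, Fintype.card_subtype]
  congr 1
  apply Finset.filter_congr
  intro i _
  by_cases h : d i <;> simp [h]
private lemma congr_exists {F : Type*} [Field F] (h2 : (2:F) ≠ 0)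
    (hsq : ∀ a : F, ∃ b : F, b ^ 2 = a)
    (X Y : Matrix (Fin 3) (Fin 3) F) (hX : X.IsSymm) (hY : Y.IsSymm)
    (h : X.rank = Y.rank) :
    ∃ A : Matrix (Fin 3) (Fin 3) F, IsUnit A.det ∧ A * X * Aᵀ = Y := by
  classical
  obtain ⟨B₁, d₁, hB₁, hd₁, hr₁⟩ := diag01 h2 hsq X hX
  obtain ⟨B₂, d₂, hB₂, hd₂, hr₂⟩ := diag01 h2 hsq Y hY
  obtain ⟨σ, hσ⟩ := perm_of_count d₁ d₂ (by rw [← hr₁, ← hr₂, h])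
  let C : Matrix (Fin 3) (Fin 3) F := B₁.submatrix σ id
  have hC : C * X * Cᵀ = diagonal fun i => if d₂ i then (1:F) else 0 := by
    have e1 : C * X * Cᵀ = (B₁ * X * B₁ᵀ).submatrix ⇑σ ⇑σ := by
      ext i j; simp [C, mul_apply]
    have e3 : ((fun i => if d₁ i then (1:F) else 0) ∘ ⇑σ) = fun i => if d₂ i then (1:F) else 0 := by
      funext i
      simp only [Function.comp_apply, hσ i]
    rw [e1, hd₁, submatrix_diagonal _ _ σ.injective, e3]
  have hdetC : IsUnit C.det := by
    rw [show C.det = σ.sign * B₁.det from det_permute σ B₁]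
    exact (IsUnit.map (Int.castRingHom F) (σ.sign).isUnit).mul hB₁
  have hBY : B₂ * Y * B₂ᵀ = C * X * Cᵀ := by rw [hd₂, hC]
  have hB₂t : IsUnit B₂ᵀ.det := by rwa [det_transpose]
  refine ⟨B₂⁻¹ * C, ?_, ?_⟩
  · rw [det_mul, det_nonsing_inv, Ring.inverse_eq_inv]
    exact (hB₂.inv).mul hdetC
  · rw [transpose_mul, transpose_nonsing_inv]
    calc B₂⁻¹ * C * X * (Cᵀ * B₂ᵀ⁻¹)
        = B₂⁻¹ * (C * X * Cᵀ) * B₂ᵀ⁻¹ := by simp only [Matrix.mul_assoc]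
      _ = B₂⁻¹ * (B₂ * Y * B₂ᵀ) * B₂ᵀ⁻¹ := by rw [hBY]
      _ = (B₂⁻¹ * B₂) * Y * (B₂ᵀ * B₂ᵀ⁻¹) := by simp only [Matrix.mul_assoc]
      _ = Y := by rw [nonsing_inv_mul _ hB₂, mul_nonsing_inv _ hB₂t, Matrix.one_mul,
            Matrix.mul_one]

private lemma congr_detone {F : Type*} [Field F] (h2 : (2:F) ≠ 0)
    (hsq : ∀ a : F, ∃ b : F, b ^ 2 = a)
    (X Y : Matrix (Fin 3) (Fin 3) F) (hX : X.IsSymm) (hY : Y.IsSymm)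
    (h : X.rank = Y.rank) (hr : Y.rank ≤ 2) :
    ∃ A : Matrix (Fin 3) (Fin 3) F, A.det = 1 ∧ A * X * Aᵀ = Y := by
  classical
  obtain ⟨A₁, hA₁u, hA₁⟩ := congr_exists h2 hsq X Y hX hY h
  obtain ⟨B, d, hB, hd, hrk⟩ := diag01 h2 hsq Y hY
  have hi : ∃ i₀, d i₀ = false := by
    by_contra hcon
    push_neg at hcon
    have hall : ∀ i, d i = true := by
      intro i
      cases h' : d i
      · exact absurd h' (hcon i)
      · rfl
    have : (Finset.univ.filter fun i => d i = true) = Finset.univ :=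
      Finset.filter_true_of_mem fun i _ => hall i
    rw [this] at hrk
    simp [Finset.card_univ] at hrk
    omega
  obtain ⟨i₀, hi₀⟩ := hi
  have hA₁0 : A₁.det ≠ 0 := hA₁u.ne_zero
  set e := (A₁.det)⁻¹ with hedef
  have he : e ≠ 0 := inv_ne_zero hA₁0
  set P : Matrix (Fin 3) (Fin 3) F :=
    diagonal (Function.update (fun _ : Fin 3 => (1:F)) i₀ e) with hPdef
  have hdetP : P.det = e := by
    rw [hPdef, det_diagonal]
    rw [Finset.prod_update_of_mem (Finset.mem_univ i₀)]
    simp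
  have hP : P * diagonal (fun i => if d i then (1:F) else 0) * Pᵀ
      = diagonal (fun i => if d i then (1:F) else 0) := by
    ext i j
    rw [hPdef, diagonal_transpose, diagonal_mul_diagonal, diagonal_mul_diagonal]
    rcases eq_or_ne i j with rfl | hij
    · rw [diagonal_apply_eq, diagonal_apply_eq]
      by_cases hii : i = i₀
      · subst hii; simp [hi₀]
      · simp [Function.update_of_ne hii]
    · rw [diagonal_apply_ne _ hij, diagonal_apply_ne _ hij]
  have hBt : IsUnit Bᵀ.det := by rwa [det_transpose]
  have hBd : B.det ≠ 0 := hB.ne_zero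
  refine ⟨B⁻¹ * P * B * A₁, ?_, ?_⟩
  · rw [det_mul, det_mul, det_mul, det_nonsing_inv, hdetP, Ring.inverse_eq_inv, hedef]
    field_simp
  · have key : B * (A₁ * X * A₁ᵀ) * Bᵀ = diagonal (fun i => if d i then (1:F) else 0) := by
      rw [hA₁, hd]
    calc B⁻¹ * P * B * A₁ * X * (B⁻¹ * P * B * A₁)ᵀ
        = B⁻¹ * (P * (B * (A₁ * X * A₁ᵀ) * Bᵀ) * Pᵀ) * B⁻¹ᵀ := by
          simp only [transpose_mul, Matrix.mul_assoc]
      _ = B⁻¹ * (B * Y * Bᵀ) * B⁻¹ᵀ := by rw [key, hP, hd]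
      _ = (B⁻¹ * B) * Y * (Bᵀ * Bᵀ⁻¹) := by
          rw [transpose_nonsing_inv]; simp only [Matrix.mul_assoc]
      _ = Y := by rw [nonsing_inv_mul _ hB, mul_nonsing_inv _ hBt, Matrix.one_mul,
            Matrix.mul_one]

/-- **Orbits of the norm-preserving group of `H₃(F)` (symmetric 3×3 matrices) over a field
of characteristic `≠ 2, 3` in which every element is a square.**
The norm-preserving group (transformations `X ↦ γ·A·X·Aᵀ` with `γ³·(det A)² = 1`) acts
transitively on symmetric matrices of rank 1, on symmetric matrices of rank 2, and, for
each `k ≠ 0`, on symmetric matrices of determinant `k`. -/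
theorem norm_preserving_orbits_symmetric (F : Type*) [Field F]
    (h2 : (2 : F) ≠ 0) (h3 : (3 : F) ≠ 0) (hsq : ∀ a : F, ∃ b : F, b ^ 2 = a) :
    (∀ X Y : Matrix (Fin 3) (Fin 3) F, X.IsSymm → Y.IsSymm → X.rank = 1 → Y.rank = 1 →
      ∃ (γ : F) (A : GL (Fin 3) F),
        γ ^ 3 * (A : Matrix (Fin 3) (Fin 3) F).det ^ 2 = 1 ∧
        γ • ((A : Matrix (Fin 3) (Fin 3) F) * X * (A : Matrix (Fin 3) (Fin 3) F)ᵀ) = Y) ∧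
    (∀ X Y : Matrix (Fin 3) (Fin 3) F, X.IsSymm → Y.IsSymm → X.rank = 2 → Y.rank = 2 →
      ∃ (γ : F) (A : GL (Fin 3) F),
        γ ^ 3 * (A : Matrix (Fin 3) (Fin 3) F).det ^ 2 = 1 ∧
        γ • ((A : Matrix (Fin 3) (Fin 3) F) * X * (A : Matrix (Fin 3) (Fin 3) F)ᵀ) = Y) ∧
    (∀ k : F, k ≠ 0 →
      ∀ X Y : Matrix (Fin 3) (Fin 3) F, X.IsSymm → Y.IsSymm → X.det = k → Y.det = k →
      ∃ (γ : F) (A : GL (Fin 3) F),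
        γ ^ 3 * (A : Matrix (Fin 3) (Fin 3) F).det ^ 2 = 1 ∧
        γ • ((A : Matrix (Fin 3) (Fin 3) F) * X * (A : Matrix (Fin 3) (Fin 3) F)ᵀ) = Y) := by
  have part12 : ∀ r : ℕ, r ≤ 2 →
      ∀ X Y : Matrix (Fin 3) (Fin 3) F, X.IsSymm → Y.IsSymm → X.rank = r → Y.rank = r →
      ∃ (γ : F) (A : GL (Fin 3) F),
        γ ^ 3 * (A : Matrix (Fin 3) (Fin 3) F).det ^ 2 = 1 ∧
        γ • ((A : Matrix (Fin 3) (Fin 3) F) * X * (A : Matrix (Fin 3) (Fin 3) F)ᵀ) = Y := by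
    intro r hr X Y hX hY hXr hYr
    obtain ⟨A, hdet, hA⟩ := congr_detone h2 hsq X Y hX hY (by rw [hXr, hYr])
      (by rw [hYr]; exact hr)
    have hu : IsUnit A := (Matrix.isUnit_iff_isUnit_det A).mpr (by rw [hdet]; exact isUnit_one)
    refine ⟨1, hu.unit, ?_, ?_⟩
    · rw [hu.unit_spec, hdet]; ring
    · rw [one_smul, hu.unit_spec, hA]
  refine ⟨part12 1 (by norm_num), part12 2 (by norm_num), ?_⟩
  intro k hk X Y hX hY hdX hdY
  have hXu : IsUnit X := (Matrix.isUnit_iff_isUnit_det X).mpr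
    (by rw [hdX]; exact isUnit_iff_ne_zero.mpr hk)
  have hYu : IsUnit Y := (Matrix.isUnit_iff_isUnit_det Y).mpr
    (by rw [hdY]; exact isUnit_iff_ne_zero.mpr hk)
  have hr : X.rank = Y.rank := by
    rw [X.rank_of_isUnit hXu, Y.rank_of_isUnit hYu]
  obtain ⟨A, hAu, hA⟩ := congr_exists h2 hsq X Y hX hY hr
  have hsq1 : A.det ^ 2 = 1 := by
    have hdet := congrArg Matrix.det hA
    rw [det_mul, det_mul, det_transpose, hdX, hdY] at hdet
    have h2' : A.det ^ 2 * k = 1 * k := by linear_combination hdet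
    exact mul_right_cancel₀ hk h2'
  have hu : IsUnit A := (Matrix.isUnit_iff_isUnit_det A).mpr hAu
  refine ⟨1, hu.unit, ?_, ?_⟩
  · rw [hu.unit_spec, hsq1]; ring
  · rw [one_smul, hu.unit_spec, hA]
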